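/- For all nonnegative integers r, s, n: H_1(r,s,n) − H_2(r,s,n) = H_1(r, s−1, n−2(r+s)+1) + H_1(r−1, s, n−4(r+s)+2), where terms with a negative argument are 0. -/

import Mathlib

/-- Odd parts are pairwise distinct. -/
def distinctOddParts (m : Multiset ℕ) : Prop := ∀ a, Odd a → m.count a ≤ 1

/-- Every even part is at least `k` (vacuous if no even part). -/
def minEvenGe (m : Multiset ℕ) (k : ℕ) : Prop := ∀ a ∈ m, Even a → k ≤ a

/-- Every odd part is at least `k` (vacuous if no odd part). -/
def minOddGe (m : Multiset ℕ) (k : ℕ) : Prop := ∀ a ∈ m, Odd a → k ≤ a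

/-- No two parts are equal or consecutive, and no two even parts are equal or
consecutive even numbers: parts pairwise differ by at least 2, even parts by at least 4. -/
def gapCond (m : Multiset ℕ) : Prop :=
  (∀ a, m.count a ≤ 1) ∧ (∀ a ∈ m, ∀ b ∈ m, a < b → a + 2 ≤ b) ∧
  (∀ a ∈ m, ∀ b ∈ m, Even a → Even b → a < b → a + 4 ≤ b)

/-- Number of even parts. -/
def evenCount (m : Multiset ℕ) : ℕ := (m.filter (fun a => Even a)).card

/-- Number of odd parts. -/
def oddCount (m : Multiset ℕ) : ℕ := (m.filter (fun a => Odd a)).card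

/-- `H i r s n` for integer arguments, 0 when any argument is negative. -/
noncomputable def H (i : ℕ) (r s n : ℤ) : ℤ :=
  if 0 ≤ r ∧ 0 ≤ s ∧ 0 ≤ n then
    ({p : Nat.Partition n.toNat | evenCount p.parts = r.toNat ∧
        oddCount p.parts = s.toNat ∧ distinctOddParts p.parts ∧
        minEvenGe p.parts (2 * (r.toNat + s.toNat + i - 1)) ∧
        minOddGe p.parts (2 * i - 1)}.ncard : ℤ)
  else 0

lemma sum_map_add_two (m : Multiset ℕ) : (m.map (· + 2)).sum = m.sum + 2 * Multiset.card m := by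
  induction m using Multiset.induction_on with
  | empty => simp
  | cons a s ih => simp [ih]; ring

lemma map_sub_add (m : Multiset ℕ) (h : ∀ a ∈ m, 2 ≤ a) :
    (m.map (· - 2)).map (· + 2) = m := by
  rw [Multiset.map_map]
  have : Multiset.map ((· + 2) ∘ (· - 2)) m = Multiset.map id m :=
    Multiset.map_congr rfl (fun x hx => by have := h x hx; simp; omega)
  rw [this, Multiset.map_id]

lemma evenCount_map (m : Multiset ℕ) : evenCount (m.map (· + 2)) = evenCount m := by
  unfold evenCount
  rw [Multiset.filter_map, Multiset.card_map]
  congr 1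
  exact Multiset.filter_congr fun x _ => by
    simp only [Function.comp, Nat.even_iff]; omega

lemma oddCount_map (m : Multiset ℕ) : oddCount (m.map (· + 2)) = oddCount m := by
  unfold oddCount
  rw [Multiset.filter_map, Multiset.card_map]
  congr 1
  exact Multiset.filter_congr fun x _ => by
    simp only [Function.comp, Nat.odd_iff]; omega

lemma mem_map_two_ge (m : Multiset ℕ) {x : ℕ} (hx : x ∈ m.map (· + 2)) : 2 ≤ x := by
  obtain ⟨y, _, rfl⟩ := Multiset.mem_map.mp hx; omega

lemma count_map_add_two (m : Multiset ℕ) (a : ℕ) :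
    (m.map (· + 2)).count (a + 2) = m.count a :=
  Multiset.count_map_eq_count' _ _ (fun x y h => by omega) a

lemma card_eq_even_add_odd (m : Multiset ℕ) :
    Multiset.card m = evenCount m + oddCount m := by
  unfold evenCount oddCount
  have h : m.filter (fun a => Odd a) = m.filter (fun a => ¬ Even a) :=
    Multiset.filter_congr fun x _ => by simp [Nat.odd_iff, Nat.even_iff]
  rw [h]
  rw [← Multiset.card_add, Multiset.filter_add_not]

lemma even_add_two_iff (y : ℕ) : Even (y + 2) ↔ Even y := by
  rw [Nat.even_iff, Nat.even_iff]; omega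

lemma odd_add_two_iff (y : ℕ) : Odd (y + 2) ↔ Odd y := by
  rw [Nat.odd_iff, Nat.odd_iff]; omega

lemma map_add_sub (m : Multiset ℕ) : (m.map (· + 2)).map (· - 2) = m := by
  rw [Multiset.map_map]
  have : Multiset.map ((· - 2) ∘ (· + 2)) m = Multiset.map id m :=
    Multiset.map_congr rfl (fun x _ => by simp)
  rw [this, Multiset.map_id]

lemma A_parts_ge {n : ℕ} (r s : ℕ) (p : Nat.Partition n)
    (her : evenCount p.parts = r) (hos : oddCount p.parts = s)
    (hd : distinctOddParts p.parts) (hme : minEvenGe p.parts (2 * (r + s)))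
    (h1 : (1 : ℕ) ∈ p.parts) :
    (∀ a ∈ p.parts.erase 1, 3 ≤ a) ∧ 1 ≤ s := by
  have hs1 : 1 ≤ s := by
    have hmem : (1 : ℕ) ∈ p.parts.filter (fun a => Odd a) :=
      Multiset.mem_filter.mpr ⟨h1, odd_one⟩
    have := Multiset.card_pos_iff_exists_mem.mpr ⟨1, hmem⟩
    unfold oddCount at hos; omega
  refine ⟨fun a ha => ?_, hs1⟩
  have hap : a ∈ p.parts := Multiset.mem_of_mem_erase ha
  rcases Nat.even_or_odd a with hev | hod
  · have hr1 : 1 ≤ r := by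
      have hmem : a ∈ p.parts.filter (fun a => Even a) :=
        Multiset.mem_filter.mpr ⟨hap, hev⟩
      have := Multiset.card_pos_iff_exists_mem.mpr ⟨a, hmem⟩
      unfold evenCount at her; omega
    have := hme a hap hev
    omega
  · have hane : a ≠ 1 := by
      intro rfl'
      subst rfl'
      have hc := hd 1 odd_one
      have : p.parts.count 1 - 1 = (p.parts.erase 1).count 1 :=
        (Multiset.count_erase_self _ _).symm
      have hmem := Multiset.count_pos.mpr ha
      omega
    have hpos := p.parts_pos hap
    have := Nat.odd_iff.mp hod
    omega

lemma keyA {n : ℕ} (p : Nat.Partition n) (hge : ∀ a ∈ p.parts.erase 1, 3 ≤ a)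
    (h1 : (1 : ℕ) ∈ p.parts) :
    (1 : ℕ) ::ₘ ((p.parts.erase 1).map (· - 2)).map (· + 2) = p.parts := by
  rw [map_sub_add _ (fun a ha => by have := hge a ha; omega), Multiset.cons_erase h1]

lemma downA_facts (r s m k : ℕ) {n : ℕ} (hs : 1 ≤ s) (hk : k + 2 = 2 * (r + s))
    (hm : m + 2 * (r + s) = n + 1) (p : Nat.Partition n)
    (h : evenCount p.parts = r ∧ oddCount p.parts = s ∧ distinctOddParts p.parts ∧
      minEvenGe p.parts (2 * (r + s)) ∧ minOddGe p.parts 1 ∧ (1 : ℕ) ∈ p.parts) :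
    (∀ i ∈ (p.parts.erase 1).map (· - 2), 0 < i) ∧
    ((p.parts.erase 1).map (· - 2)).sum = m ∧
    evenCount ((p.parts.erase 1).map (· - 2)) = r ∧
    oddCount ((p.parts.erase 1).map (· - 2)) = s - 1 ∧
    distinctOddParts ((p.parts.erase 1).map (· - 2)) ∧
    minEvenGe ((p.parts.erase 1).map (· - 2)) k ∧
    minOddGe ((p.parts.erase 1).map (· - 2)) 1 := by
  obtain ⟨her, hos, hd, hme, -, h1⟩ := h
  obtain ⟨hge, -⟩ := A_parts_ge r s p her hos hd hme h1
  set w : Multiset ℕ := (p.parts.erase 1).map (· - 2) with hw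
  have hpos : ∀ i ∈ w, 0 < i := by
    intro i hi
    obtain ⟨y, hy, rfl⟩ := Multiset.mem_map.mp hi
    have := hge y hy; omega
  have key : (1 : ℕ) ::ₘ w.map (· + 2) = p.parts := keyA p hge h1
  have hcardp : Multiset.card p.parts = r + s := by
    rw [card_eq_even_add_odd, her, hos]
  have hcardw : Multiset.card w = r + s - 1 := by
    rw [hw, Multiset.card_map, Multiset.card_erase_of_mem h1, hcardp]; rfl
  have hsum : w.sum = m := by
    have h2 := p.parts_sum
    rw [← key, Multiset.sum_cons, sum_map_add_two, hcardw] at h2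
    omega
  have hec : evenCount w = r := by
    rw [← her, ← key]
    unfold evenCount
    rw [Multiset.filter_cons_of_neg _ (by decide : ¬ Even 1)]
    exact (evenCount_map w).symm
  have hoc : oddCount w = s - 1 := by
    have : oddCount p.parts = oddCount w + 1 := by
      rw [← key]
      unfold oddCount
      rw [Multiset.filter_cons_of_pos _ odd_one, Multiset.card_cons]
      exact congrArg (· + 1) (oddCount_map w)
    omega
  have hdw : distinctOddParts w := by
    intro a ha
    have h3 : w.count a = p.parts.count (a + 2) := by
      rw [← key, Multiset.count_cons_of_ne (by omega : a + 2 ≠ 1), count_map_add_two]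
    rw [h3]
    exact hd (a + 2) ((odd_add_two_iff a).mpr ha)
  have hmew : minEvenGe w k := by
    intro a ha hev
    have hmem : a + 2 ∈ p.parts := by
      rw [← key]; exact Multiset.mem_cons_of_mem (Multiset.mem_map_of_mem _ ha)
    have := hme (a + 2) hmem ((even_add_two_iff a).mpr hev)
    omega
  exact ⟨hpos, hsum, hec, hoc, hdw, hmew, fun a ha _ => hpos a ha⟩

lemma upA_facts (r s n k : ℕ) {m : ℕ} (hs : 1 ≤ s) (hk : k + 2 = 2 * (r + s))
    (hm : m + 2 * (r + s) = n + 1) (q : Nat.Partition m)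
    (h : evenCount q.parts = r ∧ oddCount q.parts = s - 1 ∧ distinctOddParts q.parts ∧
      minEvenGe q.parts k ∧ minOddGe q.parts 1) :
    (∀ i ∈ (1 : ℕ) ::ₘ q.parts.map (· + 2), 0 < i) ∧
    ((1 : ℕ) ::ₘ q.parts.map (· + 2)).sum = n ∧
    evenCount ((1 : ℕ) ::ₘ q.parts.map (· + 2)) = r ∧
    oddCount ((1 : ℕ) ::ₘ q.parts.map (· + 2)) = s ∧
    distinctOddParts ((1 : ℕ) ::ₘ q.parts.map (· + 2)) ∧
    minEvenGe ((1 : ℕ) ::ₘ q.parts.map (· + 2)) (2 * (r + s)) ∧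
    minOddGe ((1 : ℕ) ::ₘ q.parts.map (· + 2)) 1 ∧
    (1 : ℕ) ∈ (1 : ℕ) ::ₘ q.parts.map (· + 2) := by
  obtain ⟨her, hos, hd, hme, -⟩ := h
  set u : Multiset ℕ := (1 : ℕ) ::ₘ q.parts.map (· + 2) with hu
  have hpos : ∀ i ∈ u, 0 < i := by
    intro i hi
    rcases Multiset.mem_cons.mp hi with rfl | hi'
    · omega
    · have := mem_map_two_ge _ hi'; omega
  have hcard : Multiset.card q.parts = r + (s - 1) := by
    rw [card_eq_even_add_odd, her, hos]
  have hsum : u.sum = n := by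
    rw [hu, Multiset.sum_cons, sum_map_add_two, q.parts_sum, hcard]
    omega
  have hec : evenCount u = r := by
    rw [hu]
    unfold evenCount
    rw [Multiset.filter_cons_of_neg _ (by decide : ¬ Even 1)]
    rw [show ((q.parts.map (· + 2)).filter (fun a => Even a)).card
      = evenCount (q.parts.map (· + 2)) from rfl, evenCount_map, her]
  have hoc : oddCount u = s := by
    rw [hu]
    unfold oddCount
    rw [Multiset.filter_cons_of_pos _ odd_one, Multiset.card_cons]
    rw [show ((q.parts.map (· + 2)).filter (fun a => Odd a)).card
      = oddCount (q.parts.map (· + 2)) from rfl, oddCount_map, hos]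
    omega
  have hdu : distinctOddParts u := by
    intro a ha
    by_cases h1 : a = 1
    · subst h1
      rw [hu, Multiset.count_cons_self]
      have : (q.parts.map (· + 2)).count 1 = 0 := by
        rw [Multiset.count_eq_zero]
        intro hmem
        have := mem_map_two_ge _ hmem; omega
      omega
    · have ha3 : 3 ≤ a := by
        have := Nat.odd_iff.mp ha; omega
      rw [hu, Multiset.count_cons_of_ne h1]
      have : a = (a - 2) + 2 := by omega
      rw [this, count_map_add_two]
      exact hd (a - 2) (by rw [Nat.odd_iff] at ha ⊢; omega)
  have hmeu : minEvenGe u (2 * (r + s)) := by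
    intro a hau hev
    rcases Multiset.mem_cons.mp hau with rfl | hmem
    · exact absurd hev (by decide)
    · obtain ⟨y, hy, rfl⟩ := Multiset.mem_map.mp hmem
      have := hme y hy ((even_add_two_iff y).mp hev)
      omega
  exact ⟨hpos, hsum, hec, hoc, hdu, hmeu, fun a ha _ => hpos a ha, Multiset.mem_cons_self _ _⟩

lemma Acard (r s n m k : ℕ) (hs : 1 ≤ s) (hk : k + 2 = 2 * (r + s))
    (hm : m + 2 * (r + s) = n + 1) :
    ({p : Nat.Partition n | evenCount p.parts = r ∧ oddCount p.parts = s ∧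
        distinctOddParts p.parts ∧ minEvenGe p.parts (2 * (r + s)) ∧
        minOddGe p.parts 1 ∧ (1 : ℕ) ∈ p.parts} : Set (Nat.Partition n)).ncard =
    ({q : Nat.Partition m | evenCount q.parts = r ∧ oddCount q.parts = s - 1 ∧
        distinctOddParts q.parts ∧ minEvenGe q.parts k ∧
        minOddGe q.parts 1} : Set (Nat.Partition m)).ncard := by
  rw [← Nat.card_coe_set_eq, ← Nat.card_coe_set_eq]
  apply Nat.card_congr
  refine
    { toFun := fun p =>
        ⟨⟨(p.1.parts.erase 1).map (· - 2),
          fun {i} hi => (downA_facts r s m k hs hk hm p.1 p.2).1 i hi,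
          (downA_facts r s m k hs hk hm p.1 p.2).2.1⟩,
          ⟨(downA_facts r s m k hs hk hm p.1 p.2).2.2.1,
           (downA_facts r s m k hs hk hm p.1 p.2).2.2.2.1,
           (downA_facts r s m k hs hk hm p.1 p.2).2.2.2.2.1,
           (downA_facts r s m k hs hk hm p.1 p.2).2.2.2.2.2.1,
           (downA_facts r s m k hs hk hm p.1 p.2).2.2.2.2.2.2⟩⟩
      invFun := fun q =>
        ⟨⟨(1 : ℕ) ::ₘ q.1.parts.map (· + 2),
          fun {i} hi => (upA_facts r s n k hs hk hm q.1 q.2).1 i hi,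
          (upA_facts r s n k hs hk hm q.1 q.2).2.1⟩,
          ⟨(upA_facts r s n k hs hk hm q.1 q.2).2.2.1,
           (upA_facts r s n k hs hk hm q.1 q.2).2.2.2.1,
           (upA_facts r s n k hs hk hm q.1 q.2).2.2.2.2.1,
           (upA_facts r s n k hs hk hm q.1 q.2).2.2.2.2.2.1,
           (upA_facts r s n k hs hk hm q.1 q.2).2.2.2.2.2.2.1,
           (upA_facts r s n k hs hk hm q.1 q.2).2.2.2.2.2.2.2⟩⟩
      left_inv := ?_
      right_inv := ?_ }
  · intro p
    apply Subtype.ext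
    apply Nat.Partition.ext
    obtain ⟨her, hos, hd, hme, -, h1⟩ := p.2
    exact keyA p.1 (A_parts_ge r s p.1 her hos hd hme h1).1 h1
  · intro q
    apply Subtype.ext
    apply Nat.Partition.ext
    show ((((1 : ℕ) ::ₘ q.1.parts.map (· + 2)).erase 1).map (· - 2)) = q.1.parts
    rw [Multiset.erase_cons_head, map_add_sub]

lemma B_parts_ge {n : ℕ} (r s : ℕ) (p : Nat.Partition n)
    (her : evenCount p.parts = r) (hos : oddCount p.parts = s)
    (hme : minEvenGe p.parts (2 * (r + s)))
    (h1n : (1 : ℕ) ∉ p.parts) (he : 2 * (r + s) ∈ p.parts) :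
    (∀ a ∈ p.parts.erase (2 * (r + s)), 3 ≤ a) ∧ 1 ≤ r := by
  have hr1 : 1 ≤ r := by
    have hmem : 2 * (r + s) ∈ p.parts.filter (fun a => Even a) :=
      Multiset.mem_filter.mpr ⟨he, even_two_mul _⟩
    have := Multiset.card_pos_iff_exists_mem.mpr ⟨_, hmem⟩
    unfold evenCount at her; omega
  refine ⟨fun a ha => ?_, hr1⟩
  have hap : a ∈ p.parts := Multiset.mem_of_mem_erase ha
  rcases Nat.even_or_odd a with hev | hod
  · have := hme a hap hev
    by_cases h2 : 2 ≤ r + s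
    · omega
    · exfalso
      have hrs : r + s = 1 := by omega
      have hcardp : Multiset.card p.parts = r + s := by
        rw [card_eq_even_add_odd, her, hos]
      have hc0 : Multiset.card (p.parts.erase (2 * (r + s))) = 0 := by
        rw [Multiset.card_erase_of_mem he, hcardp, hrs]; rfl
      rw [Multiset.card_eq_zero] at hc0
      rw [hc0] at ha
      exact Multiset.notMem_zero a ha
  · have hane : a ≠ 1 := fun h => h1n (h ▸ hap)
    have hpos := p.parts_pos hap
    have := Nat.odd_iff.mp hod
    omega

lemma keyB {n : ℕ} (r s : ℕ) (p : Nat.Partition n)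
    (hge : ∀ a ∈ p.parts.erase (2 * (r + s)), 3 ≤ a)
    (he : 2 * (r + s) ∈ p.parts) :
    (2 * (r + s)) ::ₘ ((p.parts.erase (2 * (r + s))).map (· - 2)).map (· + 2) = p.parts := by
  rw [map_sub_add _ (fun a ha => by have := hge a ha; omega), Multiset.cons_erase he]

lemma downB_facts (r s m k : ℕ) {n : ℕ} (hr : 1 ≤ r) (hk : k + 2 = 2 * (r + s))
    (hm : m + 4 * (r + s) = n + 2) (p : Nat.Partition n)
    (h : evenCount p.parts = r ∧ oddCount p.parts = s ∧ distinctOddParts p.parts ∧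
      minEvenGe p.parts (2 * (r + s)) ∧ minOddGe p.parts 1 ∧
      ((1 : ℕ) ∉ p.parts ∧ 2 * (r + s) ∈ p.parts)) :
    (∀ i ∈ (p.parts.erase (2 * (r + s))).map (· - 2), 0 < i) ∧
    ((p.parts.erase (2 * (r + s))).map (· - 2)).sum = m ∧
    evenCount ((p.parts.erase (2 * (r + s))).map (· - 2)) = r - 1 ∧
    oddCount ((p.parts.erase (2 * (r + s))).map (· - 2)) = s ∧
    distinctOddParts ((p.parts.erase (2 * (r + s))).map (· - 2)) ∧
    minEvenGe ((p.parts.erase (2 * (r + s))).map (· - 2)) k ∧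
    minOddGe ((p.parts.erase (2 * (r + s))).map (· - 2)) 1 := by
  obtain ⟨her, hos, hd, hme, -, h1n, he⟩ := h
  obtain ⟨hge, -⟩ := B_parts_ge r s p her hos hme h1n he
  set w : Multiset ℕ := (p.parts.erase (2 * (r + s))).map (· - 2) with hw
  have hpos : ∀ i ∈ w, 0 < i := by
    intro i hi
    obtain ⟨y, hy, rfl⟩ := Multiset.mem_map.mp hi
    have := hge y hy; omega
  have key : (2 * (r + s)) ::ₘ w.map (· + 2) = p.parts := keyB r s p hge he
  have hcardp : Multiset.card p.parts = r + s := by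
    rw [card_eq_even_add_odd, her, hos]
  have hcardw : Multiset.card w = r + s - 1 := by
    rw [hw, Multiset.card_map, Multiset.card_erase_of_mem he, hcardp]; rfl
  have hsum : w.sum = m := by
    have h2 := p.parts_sum
    rw [← key, Multiset.sum_cons, sum_map_add_two, hcardw] at h2
    omega
  have hec : evenCount w = r - 1 := by
    have : evenCount p.parts = evenCount w + 1 := by
      rw [← key]
      unfold evenCount
      rw [Multiset.filter_cons_of_pos _ (even_two_mul _), Multiset.card_cons]
      exact congrArg (· + 1) (evenCount_map w)
    omega
  have hoc : oddCount w = s := by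
    rw [← hos, ← key]
    unfold oddCount
    rw [Multiset.filter_cons_of_neg _ (by rw [Nat.odd_iff]; omega : ¬ Odd (2 * (r + s)))]
    exact (oddCount_map w).symm
  have hdw : distinctOddParts w := by
    intro a ha
    have hne : a + 2 ≠ 2 * (r + s) := by
      have := Nat.odd_iff.mp ha; omega
    have h3 : w.count a = p.parts.count (a + 2) := by
      rw [← key, Multiset.count_cons_of_ne hne, count_map_add_two]
    rw [h3]
    exact hd (a + 2) ((odd_add_two_iff a).mpr ha)
  have hmew : minEvenGe w k := by
    intro a ha hev
    have hmem : a + 2 ∈ p.parts := by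
      rw [← key]; exact Multiset.mem_cons_of_mem (Multiset.mem_map_of_mem _ ha)
    have := hme (a + 2) hmem ((even_add_two_iff a).mpr hev)
    omega
  exact ⟨hpos, hsum, hec, hoc, hdw, hmew, fun a ha _ => hpos a ha⟩

lemma upB_facts (r s n k : ℕ) {m : ℕ} (hr : 1 ≤ r) (hk : k + 2 = 2 * (r + s))
    (hm : m + 4 * (r + s) = n + 2) (q : Nat.Partition m)
    (h : evenCount q.parts = r - 1 ∧ oddCount q.parts = s ∧ distinctOddParts q.parts ∧
      minEvenGe q.parts k ∧ minOddGe q.parts 1) :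
    (∀ i ∈ (2 * (r + s)) ::ₘ q.parts.map (· + 2), 0 < i) ∧
    ((2 * (r + s)) ::ₘ q.parts.map (· + 2)).sum = n ∧
    evenCount ((2 * (r + s)) ::ₘ q.parts.map (· + 2)) = r ∧
    oddCount ((2 * (r + s)) ::ₘ q.parts.map (· + 2)) = s ∧
    distinctOddParts ((2 * (r + s)) ::ₘ q.parts.map (· + 2)) ∧
    minEvenGe ((2 * (r + s)) ::ₘ q.parts.map (· + 2)) (2 * (r + s)) ∧
    minOddGe ((2 * (r + s)) ::ₘ q.parts.map (· + 2)) 1 ∧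
    ((1 : ℕ) ∉ (2 * (r + s)) ::ₘ q.parts.map (· + 2) ∧
      2 * (r + s) ∈ (2 * (r + s)) ::ₘ q.parts.map (· + 2)) := by
  obtain ⟨her, hos, hd, hme, -⟩ := h
  set u : Multiset ℕ := (2 * (r + s)) ::ₘ q.parts.map (· + 2) with hu
  have hpos : ∀ i ∈ u, 0 < i := by
    intro i hi
    rcases Multiset.mem_cons.mp hi with rfl | hi'
    · omega
    · have := mem_map_two_ge _ hi'; omega
  have hcard : Multiset.card q.parts = (r - 1) + s := by
    rw [card_eq_even_add_odd, her, hos]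
  have hsum : u.sum = n := by
    rw [hu, Multiset.sum_cons, sum_map_add_two, q.parts_sum, hcard]
    omega
  have hec : evenCount u = r := by
    rw [hu]
    unfold evenCount
    rw [Multiset.filter_cons_of_pos _ (even_two_mul _), Multiset.card_cons]
    rw [show ((q.parts.map (· + 2)).filter (fun a => Even a)).card
      = evenCount (q.parts.map (· + 2)) from rfl, evenCount_map, her]
    omega
  have hoc : oddCount u = s := by
    rw [hu]
    unfold oddCount
    rw [Multiset.filter_cons_of_neg _ (by rw [Nat.odd_iff]; omega : ¬ Odd (2 * (r + s)))]
    rw [show ((q.parts.map (· + 2)).filter (fun a => Odd a)).card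
      = oddCount (q.parts.map (· + 2)) from rfl, oddCount_map, hos]
  have hdu : distinctOddParts u := by
    intro a ha
    have hne : a ≠ 2 * (r + s) := by
      have := Nat.odd_iff.mp ha; omega
    rw [hu, Multiset.count_cons_of_ne hne]
    by_cases h1 : a = 1
    · subst h1
      rw [Multiset.count_eq_zero.mpr (fun hmem => by have := mem_map_two_ge _ hmem; omega)]
      omega
    · have ha3 : 3 ≤ a := by
        have := Nat.odd_iff.mp ha; omega
      have : a = (a - 2) + 2 := by omega
      rw [this, count_map_add_two]
      exact hd (a - 2) (by rw [Nat.odd_iff] at ha ⊢; omega)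
  have hmeu : minEvenGe u (2 * (r + s)) := by
    intro a hau hev
    rcases Multiset.mem_cons.mp hau with rfl | hmem
    · exact le_refl _
    · obtain ⟨y, hy, rfl⟩ := Multiset.mem_map.mp hmem
      have := hme y hy ((even_add_two_iff y).mp hev)
      omega
  have h1nu : (1 : ℕ) ∉ u := by
    rw [hu]
    intro hmem
    rcases Multiset.mem_cons.mp hmem with h' | h'
    · omega
    · have := mem_map_two_ge _ h'; omega
  exact ⟨hpos, hsum, hec, hoc, hdu, hmeu, fun a ha _ => hpos a ha,
    h1nu, Multiset.mem_cons_self _ _⟩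

lemma Bcard (r s n m k : ℕ) (hr : 1 ≤ r) (hk : k + 2 = 2 * (r + s))
    (hm : m + 4 * (r + s) = n + 2) :
    ({p : Nat.Partition n | evenCount p.parts = r ∧ oddCount p.parts = s ∧
        distinctOddParts p.parts ∧ minEvenGe p.parts (2 * (r + s)) ∧
        minOddGe p.parts 1 ∧ ((1 : ℕ) ∉ p.parts ∧ 2 * (r + s) ∈ p.parts)} :
      Set (Nat.Partition n)).ncard =
    ({q : Nat.Partition m | evenCount q.parts = r - 1 ∧ oddCount q.parts = s ∧
        distinctOddParts q.parts ∧ minEvenGe q.parts k ∧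
        minOddGe q.parts 1} : Set (Nat.Partition m)).ncard := by
  rw [← Nat.card_coe_set_eq, ← Nat.card_coe_set_eq]
  apply Nat.card_congr
  refine
    { toFun := fun p =>
        ⟨⟨(p.1.parts.erase (2 * (r + s))).map (· - 2),
          fun {i} hi => (downB_facts r s m k hr hk hm p.1 p.2).1 i hi,
          (downB_facts r s m k hr hk hm p.1 p.2).2.1⟩,
          ⟨(downB_facts r s m k hr hk hm p.1 p.2).2.2.1,
           (downB_facts r s m k hr hk hm p.1 p.2).2.2.2.1,
           (downB_facts r s m k hr hk hm p.1 p.2).2.2.2.2.1,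
           (downB_facts r s m k hr hk hm p.1 p.2).2.2.2.2.2.1,
           (downB_facts r s m k hr hk hm p.1 p.2).2.2.2.2.2.2⟩⟩
      invFun := fun q =>
        ⟨⟨(2 * (r + s)) ::ₘ q.1.parts.map (· + 2),
          fun {i} hi => (upB_facts r s n k hr hk hm q.1 q.2).1 i hi,
          (upB_facts r s n k hr hk hm q.1 q.2).2.1⟩,
          ⟨(upB_facts r s n k hr hk hm q.1 q.2).2.2.1,
           (upB_facts r s n k hr hk hm q.1 q.2).2.2.2.1,
           (upB_facts r s n k hr hk hm q.1 q.2).2.2.2.2.1,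
           (upB_facts r s n k hr hk hm q.1 q.2).2.2.2.2.2.1,
           (upB_facts r s n k hr hk hm q.1 q.2).2.2.2.2.2.2.1,
           (upB_facts r s n k hr hk hm q.1 q.2).2.2.2.2.2.2.2⟩⟩
      left_inv := ?_
      right_inv := ?_ }
  · intro p
    apply Subtype.ext
    apply Nat.Partition.ext
    obtain ⟨her, hos, hd, hme, -, h1n, he⟩ := p.2
    exact keyB r s p.1 (B_parts_ge r s p.1 her hos hme h1n he).1 he
  · intro q
    apply Subtype.ext
    apply Nat.Partition.ext
    show ((((2 * (r + s)) ::ₘ q.1.parts.map (· + 2)).erase (2 * (r + s))).map (· - 2)) = q.1.parts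
    rw [Multiset.erase_cons_head, map_add_sub]

lemma Abound {n : ℕ} (r s : ℕ) (p : Nat.Partition n)
    (h : evenCount p.parts = r ∧ oddCount p.parts = s ∧ distinctOddParts p.parts ∧
      minEvenGe p.parts (2 * (r + s)) ∧ minOddGe p.parts 1 ∧ (1 : ℕ) ∈ p.parts) :
    1 ≤ s ∧ 2 * (r + s) ≤ n + 1 := by
  obtain ⟨her, hos, hd, hme, -, h1⟩ := h
  obtain ⟨hge, hs1⟩ := A_parts_ge r s p her hos hd hme h1
  have hcardp : Multiset.card p.parts = r + s := by
    rw [card_eq_even_add_odd, her, hos]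
  have hce : Multiset.card (p.parts.erase 1) = r + s - 1 := by
    rw [Multiset.card_erase_of_mem h1, hcardp]; rfl
  have hsumsplit : n = 1 + (p.parts.erase 1).sum := by
    calc n = p.parts.sum := p.parts_sum.symm
    _ = ((1 : ℕ) ::ₘ p.parts.erase 1).sum := by rw [Multiset.cons_erase h1]
    _ = 1 + (p.parts.erase 1).sum := Multiset.sum_cons _ _
  have hbound := Multiset.card_nsmul_le_sum (s := p.parts.erase 1) (a := 2)
    (fun x hx => by have := hge x hx; omega)
  simp only [smul_eq_mul] at hbound
  rw [hce] at hbound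
  omega

lemma Bbound {n : ℕ} (r s : ℕ) (p : Nat.Partition n)
    (h : evenCount p.parts = r ∧ oddCount p.parts = s ∧ distinctOddParts p.parts ∧
      minEvenGe p.parts (2 * (r + s)) ∧ minOddGe p.parts 1 ∧
      ((1 : ℕ) ∉ p.parts ∧ 2 * (r + s) ∈ p.parts)) :
    1 ≤ r ∧ 4 * (r + s) ≤ n + 2 := by
  obtain ⟨her, hos, hd, hme, -, h1n, he⟩ := h
  obtain ⟨hge, hr1⟩ := B_parts_ge r s p her hos hme h1n he
  have hcardp : Multiset.card p.parts = r + s := by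
    rw [card_eq_even_add_odd, her, hos]
  have hce : Multiset.card (p.parts.erase (2 * (r + s))) = r + s - 1 := by
    rw [Multiset.card_erase_of_mem he, hcardp]; rfl
  have hsumsplit : n = 2 * (r + s) + (p.parts.erase (2 * (r + s))).sum := by
    calc n = p.parts.sum := p.parts_sum.symm
    _ = ((2 * (r + s)) ::ₘ p.parts.erase (2 * (r + s))).sum := by rw [Multiset.cons_erase he]
    _ = 2 * (r + s) + (p.parts.erase (2 * (r + s))).sum := Multiset.sum_cons _ _
  have hbound := Multiset.card_nsmul_le_sum (s := p.parts.erase (2 * (r + s))) (a := 2)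
    (fun x hx => by have := hge x hx; omega)
  simp only [smul_eq_mul] at hbound
  rw [hce] at hbound
  omega

lemma H_nat (i r s n : ℕ) :
    H i r s n = (({p : Nat.Partition n | evenCount p.parts = r ∧ oddCount p.parts = s ∧
        distinctOddParts p.parts ∧ minEvenGe p.parts (2 * (r + s + i - 1)) ∧
        minOddGe p.parts (2 * i - 1)} : Set (Nat.Partition n)).ncard : ℤ) := by
  unfold H
  rw [if_pos ⟨Int.natCast_nonneg r, Int.natCast_nonneg s, Int.natCast_nonneg n⟩]
  simp only [Int.toNat_natCast]

theorem H_recurrence (r s n : ℕ) :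
    H 1 r s n - H 2 r s n =
      H 1 r ((s : ℤ) - 1) ((n : ℤ) - 2 * ((r : ℤ) + s) + 1) +
        H 1 ((r : ℤ) - 1) s ((n : ℤ) - 4 * ((r : ℤ) + s) + 2) := by
  classical
  set S1 : Set (Nat.Partition n) := {p | evenCount p.parts = r ∧ oddCount p.parts = s ∧
    distinctOddParts p.parts ∧ minEvenGe p.parts (2 * (r + s)) ∧ minOddGe p.parts 1}
    with hS1def
  set S2 : Set (Nat.Partition n) := {p | evenCount p.parts = r ∧ oddCount p.parts = s ∧
    distinctOddParts p.parts ∧ minEvenGe p.parts (2 * (r + s + 1)) ∧ minOddGe p.parts 3}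
    with hS2def
  set A : Set (Nat.Partition n) := {p | evenCount p.parts = r ∧ oddCount p.parts = s ∧
    distinctOddParts p.parts ∧ minEvenGe p.parts (2 * (r + s)) ∧ minOddGe p.parts 1 ∧
    (1 : ℕ) ∈ p.parts} with hAdef
  set B : Set (Nat.Partition n) := {p | evenCount p.parts = r ∧ oddCount p.parts = s ∧
    distinctOddParts p.parts ∧ minEvenGe p.parts (2 * (r + s)) ∧ minOddGe p.parts 1 ∧
    ((1 : ℕ) ∉ p.parts ∧ 2 * (r + s) ∈ p.parts)} with hBdef
  have hH1 : H 1 r s n = (S1.ncard : ℤ) := by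
    rw [H_nat]
    simp only [show r + s + 1 - 1 = r + s from by omega,
      show (2 * 1 - 1 : ℕ) = 1 from by norm_num]
    rfl
  have hH2 : H 2 r s n = (S2.ncard : ℤ) := by
    rw [H_nat]
    simp only [show r + s + 2 - 1 = r + s + 1 from by omega,
      show (2 * 2 - 1 : ℕ) = 3 from by norm_num]
    rfl
  have hsub : S2 ⊆ S1 := by
    rintro p ⟨h1, h2, h3, h4, h5⟩
    exact ⟨h1, h2, h3, fun a ha hev => by have := h4 a ha hev; omega,
      fun a ha hod => by have := h5 a ha hod; omega⟩
  have hdiff : S1 \ S2 = A ∪ B := by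
    ext p
    simp only [hS1def, hS2def, hAdef, hBdef, Set.mem_diff, Set.mem_setOf_eq, Set.mem_union]
    constructor
    · rintro ⟨⟨h1, h2, h3, h4, h5⟩, hn2⟩
      by_cases hone : (1 : ℕ) ∈ p.parts
      · exact Or.inl ⟨h1, h2, h3, h4, h5, hone⟩
      · refine Or.inr ⟨h1, h2, h3, h4, h5, hone, ?_⟩
        by_contra hne
        apply hn2
        refine ⟨h1, h2, h3, ?_, ?_⟩
        · intro a ha hev
          have hge := h4 a ha hev
          have hane : a ≠ 2 * (r + s) := fun hh => hne (hh ▸ ha)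
          have hev2 := Nat.even_iff.mp hev
          omega
        · intro a ha hod
          have hane : a ≠ 1 := fun hh => hone (hh ▸ ha)
          have := p.parts_pos ha
          have := Nat.odd_iff.mp hod
          omega
    · rintro (⟨h1, h2, h3, h4, h5, hone⟩ | ⟨h1, h2, h3, h4, h5, hone, he⟩)
      · exact ⟨⟨h1, h2, h3, h4, h5⟩,
          fun hc => by have := hc.2.2.2.2 1 hone odd_one; omega⟩
      · exact ⟨⟨h1, h2, h3, h4, h5⟩,
          fun hc => by have := hc.2.2.2.1 (2 * (r + s)) he (even_two_mul _); omega⟩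
  have hdisj : Disjoint A B :=
    Set.disjoint_left.mpr (fun p hp hq => hq.2.2.2.2.2.1 hp.2.2.2.2.2)
  have hcards : (S1.ncard : ℤ) - S2.ncard = A.ncard + B.ncard := by
    have e1 : (S1 \ S2).ncard = S1.ncard - S2.ncard := Set.ncard_diff hsub (Set.toFinite _)
    have e2 : S2.ncard ≤ S1.ncard := Set.ncard_le_ncard hsub (Set.toFinite _)
    have e3 : (S1 \ S2).ncard = A.ncard + B.ncard := by
      rw [hdiff]
      exact Set.ncard_union_eq hdisj (Set.toFinite _) (Set.toFinite _)
    omega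
  have hterm1 : H 1 r ((s : ℤ) - 1) ((n : ℤ) - 2 * ((r : ℤ) + s) + 1) = (A.ncard : ℤ) := by
    by_cases hA : 1 ≤ s ∧ 2 * (r + s) ≤ n + 1
    · have hc1 : ((s : ℤ) - 1) = ((s - 1 : ℕ) : ℤ) := by omega
      have hc2 : ((n : ℤ) - 2 * ((r : ℤ) + s) + 1) = ((n + 1 - 2 * (r + s) : ℕ) : ℤ) := by
        omega
      rw [hc1, hc2, H_nat]
      simp only [show r + (s - 1) + 1 - 1 = r + (s - 1) from by omega,
        show (2 * 1 - 1 : ℕ) = 1 from by norm_num]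
      exact_mod_cast
        (Acard r s n (n + 1 - 2 * (r + s)) (2 * (r + (s - 1))) hA.1 (by omega) (by omega)).symm
    · have hAe : A = ∅ :=
        Set.eq_empty_iff_forall_notMem.mpr (fun p hp => hA (Abound r s p hp))
      rw [hAe, Set.ncard_empty]
      unfold H
      split_ifs with h
      · exfalso; obtain ⟨hh1, hh2, hh3⟩ := h; omega
      · rfl
  have hterm2 : H 1 ((r : ℤ) - 1) s ((n : ℤ) - 4 * ((r : ℤ) + s) + 2) = (B.ncard : ℤ) := by
    by_cases hB : 1 ≤ r ∧ 4 * (r + s) ≤ n + 2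
    · have hc1 : ((r : ℤ) - 1) = ((r - 1 : ℕ) : ℤ) := by omega
      have hc2 : ((n : ℤ) - 4 * ((r : ℤ) + s) + 2) = ((n + 2 - 4 * (r + s) : ℕ) : ℤ) := by
        omega
      rw [hc1, hc2, H_nat]
      simp only [show (r - 1) + s + 1 - 1 = (r - 1) + s from by omega,
        show (2 * 1 - 1 : ℕ) = 1 from by norm_num]
      exact_mod_cast
        (Bcard r s n (n + 2 - 4 * (r + s)) (2 * ((r - 1) + s)) hB.1 (by omega) (by omega)).symm
    · have hBe : B = ∅ :=
        Set.eq_empty_iff_forall_notMem.mpr (fun p hp => hB (Bbound r s p hp))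
      rw [hBe, Set.ncard_empty]
      unfold H
      split_ifs with h
      · exfalso; obtain ⟨hh1, hh2, hh3⟩ := h; omega
      · rfl
  rw [hH1, hH2, hterm1, hterm2]
  exact hcards
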